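/- arXiv:1605.08945 — 3 statements merged into one kernel-verified Lean document; each statement's English description precedes it below -/
import Mathlib

section
/- Let f : X → Y and g : Y → Z be maps of cubespaces where f is a fibration and g ∘ f is a fibration. Then g is a fibration. In particular, if f : X → Y is a fibration and X is fibrant (has k-completion for all k), then Y is fibrant. -/
/-- A morphism of discrete cubes `{0,1}^k → {0,1}^ℓ`: each coordinate function is
identically `0`, identically `1`, equal to `ω_j`, or equal to `1 - ω_j`. -/
def IsCubeMorphism {k l : ℕ} (ρ : (Fin k → Bool) → (Fin l → Bool)) : Prop :=
  ∀ i : Fin l, (∀ ω, ρ ω i = false) ∨ (∀ ω, ρ ω i = true) ∨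
    (∃ j, ∀ ω, ρ ω i = ω j) ∨ (∃ j, ∀ ω, ρ ω i = !(ω j))

/-- A cubespace: a set `X` with cube sets `C^k(X) ⊆ X^{{0,1}^k}`, with `C^0(X) = X`,
closed under precomposition with morphisms of discrete cubes. -/
structure Cubespace (X : Type*) where
  C : ∀ k : ℕ, Set ((Fin k → Bool) → X)
  C_zero : C 0 = Set.univ
  C_morph : ∀ {k l : ℕ} (ρ : (Fin k → Bool) → (Fin l → Bool)),
    IsCubeMorphism ρ → ∀ c ∈ C l, (c ∘ ρ) ∈ C k

/-- The top vertex `(1,…,1)` of the discrete cube `{0,1}^k`. -/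
def topVert (k : ℕ) : Fin k → Bool := fun _ => true

/-- An `(n+1)`-corner: a configuration whose restriction to every lower
codimension-1 face is an `n`-cube (the value at the top vertex is irrelevant). -/
def IsCubeCorner {X : Type*} (CS : Cubespace X) (n : ℕ) (lam : (Fin (n + 1) → Bool) → X) : Prop :=
  ∀ i : Fin (n + 1), (fun ω : Fin n → Bool => lam (i.insertNth false ω)) ∈ CS.C n

/-- `(n+1)`-completion: every `(n+1)`-corner can be completed to an `(n+1)`-cube. -/
def HasCompletion {X : Type*} (CS : Cubespace X) (n : ℕ) : Prop :=
  ∀ lam : (Fin (n + 1) → Bool) → X, IsCubeCorner CS n lam →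
    ∃ x : X, (fun ω => if ω = topVert (n + 1) then x else lam ω) ∈ CS.C (n + 1)

/-- `k`-uniqueness: two `k`-cubes agreeing at all vertices except the top vertex are equal. -/
def HasUniqueness {X : Type*} (CS : Cubespace X) (k : ℕ) : Prop :=
  ∀ c ∈ CS.C k, ∀ c' ∈ CS.C k, (∀ ω, ω ≠ topVert k → c ω = c' ω) → c = c'

/-- The glueing property: two `(n+1)`-cubes agreeing along a common codimension-1 face
can be glued to form another `(n+1)`-cube. -/
def HasGlueing {X : Type*} (CS : Cubespace X) : Prop :=
  ∀ (n : ℕ) (c c' : (Fin (n + 1) → Bool) → X), c ∈ CS.C (n + 1) → c' ∈ CS.C (n + 1) →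
    (∀ ω : Fin n → Bool, c (Fin.snoc ω true) = c' (Fin.snoc ω false)) →
    (fun ω : Fin (n + 1) → Bool => if ω (Fin.last n) = true then c' ω else c ω) ∈ CS.C (n + 1)

/-- A cubespace morphism: maps `k`-cubes to `k`-cubes for every `k`. -/
def IsMorphism {X Y : Type*} (CX : Cubespace X) (CY : Cubespace Y) (f : X → Y) : Prop :=
  ∀ k : ℕ, ∀ c ∈ CX.C k, (fun ω => f (c ω)) ∈ CY.C k

/-- A fibration: a cubespace morphism such that every corner of `X` lying over
(all but the top vertex of) a cube of `Y` can be completed to a cube of `X`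
mapping onto that cube.  (The `k = 0` case of corner completion is surjectivity.) -/
def IsFibration {X Y : Type*} (CX : Cubespace X) (CY : Cubespace Y) (f : X → Y) : Prop :=
  IsMorphism CX CY f ∧ Function.Surjective f ∧
  ∀ (n : ℕ) (lam : (Fin (n + 1) → Bool) → X) (c : (Fin (n + 1) → Bool) → Y),
    IsCubeCorner CX n lam → c ∈ CY.C (n + 1) →
    (∀ ω, ω ≠ topVert (n + 1) → f (lam ω) = c ω) →
    ∃ x : X, f x = c (topVert (n + 1)) ∧
      (fun ω => if ω = topVert (n + 1) then x else lam ω) ∈ CX.C (n + 1)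

/-- weight: number of `true` coordinates -/
def cwt {n : ℕ} (v : Fin n → Bool) : ℕ := (Finset.univ.filter fun i => v i = true).card

lemma cwt_le {n : ℕ} (v : Fin n → Bool) : cwt v ≤ n :=
  le_trans (Finset.card_filter_le _ _) (by simp)

lemma cwt_topVert (n : ℕ) : cwt (topVert n) = n := by simp [cwt, topVert]

lemma eq_top_of_cwt {n : ℕ} {v : Fin n → Bool} (h : cwt v = n) : v = topVert n := by
  have h2 : (Finset.univ.filter fun i => v i = true) = Finset.univ :=
    Finset.eq_univ_of_card _ (by rw [Fintype.card_fin]; exact h)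
  funext i
  have : i ∈ Finset.univ.filter fun i => v i = true := by rw [h2]; exact Finset.mem_univ i
  simpa [topVert] using (Finset.mem_filter.mp this).2

lemma cwt_lt_of_ne_top {n : ℕ} {v : Fin (n+1) → Bool} (h : v ≠ topVert (n+1)) : cwt v ≤ n := by
  rcases Nat.lt_or_ge (cwt v) (n+1) with h1 | h1
  · omega
  · exact absurd (eq_top_of_cwt (le_antisymm (cwt_le v) h1)) h

lemma cwt_mono {n : ℕ} {w v : Fin n → Bool} (h : ∀ i, w i = true → v i = true) :
    cwt w ≤ cwt v :=
  Finset.card_le_card (fun i hi => Finset.mem_filter.mpr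
    ⟨Finset.mem_univ i, h i (Finset.mem_filter.mp hi).2⟩)

lemma cwt_strict {n : ℕ} {w v : Fin n → Bool} (h : ∀ i, w i = true → v i = true)
    (hne : w ≠ v) : cwt w < cwt v := by
  apply Finset.card_lt_card
  rw [Finset.ssubset_iff_subset_ne]
  constructor
  · exact fun i hi => Finset.mem_filter.mpr ⟨Finset.mem_univ i, h i (Finset.mem_filter.mp hi).2⟩
  · intro hc
    apply hne
    funext i
    have : (i ∈ Finset.univ.filter fun j => w j = true) ↔
        (i ∈ Finset.univ.filter fun j => v j = true) := by rw [hc]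
    simp only [Finset.mem_filter, Finset.mem_univ, true_and] at this
    cases hw : w i <;> cases hv : v i <;> simp_all

lemma const_mem_C {X : Type*} (CS : Cubespace X) (k : ℕ) (x : X) :
    (fun _ : Fin k → Bool => x) ∈ CS.C k := by
  have hc : (fun _ : Fin 0 → Bool => x) ∈ CS.C 0 := by rw [CS.C_zero]; trivial
  have hρ : IsCubeMorphism (fun (_ : Fin k → Bool) => (Fin.elim0 : Fin 0 → Bool)) :=
    fun i => i.elim0
  exact CS.C_morph _ hρ _ hc

lemma cube_isCorner {X : Type*} (CS : Cubespace X) {n : ℕ} {c : (Fin (n+1) → Bool) → X}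
    (hc : c ∈ CS.C (n+1)) : IsCubeCorner CS n c := by
  intro i
  have hρ : IsCubeMorphism (fun ω : Fin n → Bool => i.insertNth false ω) := by
    intro j
    by_cases h : j = i
    · subst h; exact Or.inl fun ω => Fin.insertNth_apply_same _ _ _
    · obtain ⟨s, hs⟩ := Fin.exists_succAbove_eq h
      exact Or.inr (Or.inr (Or.inl ⟨s, fun ω => by
        simp only []
        rw [← hs, Fin.insertNth_apply_succAbove]⟩))
  exact CS.C_morph _ hρ c hc

/-- If `μ` is a corner, the restriction to the subcube below any non-top vertex `v`
(as a degenerate full-dimension cube) is a cube. -/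
lemma corner_sub {Y : Type*} (CS : Cubespace Y) {n : ℕ} {μ : (Fin (n+1) → Bool) → Y}
    (hμ : IsCubeCorner CS n μ) {v : Fin (n+1) → Bool} (hv : v ≠ topVert (n+1)) :
    (fun ω : Fin (n+1) → Bool => μ (fun i => v i && ω i)) ∈ CS.C (n+1) := by
  have hvi : ∃ i, v i = false := by
    by_contra hc
    push_neg at hc
    exact hv (funext fun i => by
      have := hc i
      cases h : v i
      · exact absurd h this
      · rfl)
  obtain ⟨i, hi⟩ := hvi
  set ρ : (Fin (n+1) → Bool) → (Fin n → Bool) :=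
    fun ω s => v (i.succAbove s) && ω (i.succAbove s) with hρdef
  have hρ : IsCubeMorphism ρ := by
    intro s
    cases h : v (i.succAbove s)
    · exact Or.inl fun ω => by simp [hρdef, h]
    · exact Or.inr (Or.inr (Or.inl ⟨i.succAbove s, fun ω => by simp [hρdef, h]⟩))
  have key : (fun ω : Fin (n+1) → Bool => μ (fun j => v j && ω j)) =
      (fun ω' : Fin n → Bool => μ (i.insertNth false ω')) ∘ ρ := by
    funext ω
    simp only [Function.comp_apply]
    congr 1
    funext j
    by_cases h : j = i
    · subst h; rw [Fin.insertNth_apply_same, hi]; rfl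
    · obtain ⟨s, hs⟩ := Fin.exists_succAbove_eq h
      rw [← hs, Fin.insertNth_apply_succAbove]
  rw [key]
  exact CS.C_morph ρ hρ _ (hμ i)

/-- Conversely, if all proper subcube restrictions are cubes, then `lam` is a corner. -/
lemma corner_of_sub {X : Type*} (CS : Cubespace X) {n : ℕ} {lam : (Fin (n+1) → Bool) → X}
    (h : ∀ v : Fin (n+1) → Bool, v ≠ topVert (n+1) →
      (fun ω : Fin (n+1) → Bool => lam (fun i => v i && ω i)) ∈ CS.C (n+1)) :
    IsCubeCorner CS n lam := by
  intro i
  set v : Fin (n+1) → Bool := fun j => if j = i then false else true with hvdef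
  have hvne : v ≠ topVert (n+1) := by
    intro hc
    have := congrFun hc i
    simp [hvdef, topVert] at this
  have hρ : IsCubeMorphism (fun ω : Fin n → Bool => i.insertNth false ω) := by
    intro j
    by_cases hj : j = i
    · subst hj; exact Or.inl fun ω => Fin.insertNth_apply_same _ _ _
    · obtain ⟨s, hs⟩ := Fin.exists_succAbove_eq hj
      exact Or.inr (Or.inr (Or.inl ⟨s, fun ω => by
        simp only []
        rw [← hs, Fin.insertNth_apply_succAbove]⟩))
  have key : (fun ω : Fin n → Bool => lam (i.insertNth false ω)) =
      (fun ω : Fin (n+1) → Bool => lam (fun j => v j && ω j)) ∘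
        (fun ω : Fin n → Bool => i.insertNth false ω) := by
    funext ω
    simp only [Function.comp_apply]
    congr 1
    funext j
    by_cases hj : j = i
    · subst hj; rw [Fin.insertNth_apply_same]; simp [hvdef]
    · simp [hvdef, hj]
  rw [key]
  exact CS.C_morph _ hρ _ (h v hvne)

lemma exists_false_of_ne_top {k : ℕ} {ω : Fin k → Bool} (h : ω ≠ topVert k) :
    ∃ j, ω j = false := by
  by_contra hc
  push_neg at hc
  exact h (funext fun j => by
    cases hj : ω j
    · exact absurd hj (hc j)
    · rfl)

/-- Embedding of the `(m+1)`-cube onto the subcube below `v`, given an equivalence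
between the support of `v` and `Fin (m+1)`. -/
def vEmb {n m : ℕ} (v : Fin (n+1) → Bool) (E0 : {i // v i = true} ≃ Fin (m+1)) :
    (Fin (m+1) → Bool) → (Fin (n+1) → Bool) :=
  fun ω i => if h : v i = true then ω (E0 ⟨i, h⟩) else false

section vEmb
variable {n m : ℕ} {v : Fin (n+1) → Bool} (E0 : {i // v i = true} ≃ Fin (m+1))

lemma vEmb_pos (ω : Fin (m+1) → Bool) {i : Fin (n+1)} (h : v i = true) :
    vEmb v E0 ω i = ω (E0 ⟨i, h⟩) := dif_pos h

lemma vEmb_neg (ω : Fin (m+1) → Bool) {i : Fin (n+1)} (h : ¬ (v i = true)) :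
    vEmb v E0 ω i = false := dif_neg h

lemma vEmb_le (ω : Fin (m+1) → Bool) {i : Fin (n+1)} (h : vEmb v E0 ω i = true) :
    v i = true := by
  by_contra hc
  rw [vEmb_neg E0 ω hc] at h
  exact Bool.noConfusion h

lemma vEmb_e (ω : Fin (m+1) → Bool) (j : Fin (m+1)) :
    vEmb v E0 ω ((E0.symm j : Fin (n+1))) = ω j := by
  rw [vEmb_pos E0 ω (E0.symm j).2]
  congr 1
  rw [show (⟨(E0.symm j : Fin (n+1)), (E0.symm j).2⟩ : {i // v i = true}) = E0.symm j from
    Subtype.ext rfl, Equiv.apply_symm_apply]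

lemma vEmb_morph : IsCubeMorphism (vEmb v E0) := by
  intro i
  by_cases h : v i = true
  · exact Or.inr (Or.inr (Or.inl ⟨E0 ⟨i, h⟩, fun ω => vEmb_pos E0 ω h⟩))
  · exact Or.inl fun ω => vEmb_neg E0 ω h

lemma and_vEmb (ω : Fin (m+1) → Bool) :
    (fun i => v i && vEmb v E0 ω i) = vEmb v E0 ω := by
  funext i
  by_cases h : v i = true
  · rw [h, Bool.true_and]
  · rw [vEmb_neg E0 ω h, Bool.and_false]

lemma vEmb_top : vEmb v E0 (topVert (m+1)) = v := by
  funext i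
  by_cases h : v i = true
  · rw [vEmb_pos E0 _ h, h]; rfl
  · rw [vEmb_neg E0 _ h]
    cases hv : v i
    · rfl
    · exact absurd hv h

lemma vEmb_proj (ω : Fin (n+1) → Bool) :
    vEmb v E0 (fun j => ω ((E0.symm j : Fin (n+1)))) = fun i => v i && ω i := by
  funext i
  by_cases h : v i = true
  · rw [vEmb_pos E0 _ h, h, Bool.true_and]
    congr 1
    rw [Equiv.symm_apply_apply]
  · rw [vEmb_neg E0 _ h]
    cases hv : v i
    · rfl
    · exact absurd hv h

lemma proj_top_iff (ω : Fin (n+1) → Bool) :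
    ((fun j => ω ((E0.symm j : Fin (n+1)))) = topVert (m+1)) ↔
      ((fun i => v i && ω i) = v) := by
  constructor
  · intro h
    funext i
    by_cases hv : v i = true
    · have h2 := congrFun h (E0 ⟨i, hv⟩)
      rw [Equiv.symm_apply_apply] at h2
      have h3 : ω i = true := h2
      rw [hv, h3]
      rfl
    · have h3 : v i = false := by
        cases hvv : v i
        · rfl
        · exact absurd hvv hv
      rw [h3, Bool.false_and]
  · intro h
    funext j
    have h2 := congrFun h ((E0.symm j : Fin (n+1)))
    rw [(E0.symm j).2, Bool.true_and] at h2
    exact h2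

end vEmb

lemma fill_vertex {X Y : Type*} {CX : Cubespace X} {CY : Cubespace Y} {f : X → Y}
    (hf : IsFibration CX CY f) {n m : ℕ} {μ : (Fin (n+1) → Bool) → Y}
    (hμ : ∀ v : Fin (n+1) → Bool, v ≠ topVert (n+1) →
      (fun ω : Fin (n+1) → Bool => μ (fun i => v i && ω i)) ∈ CY.C (n+1))
    (lam : (Fin (n+1) → Bool) → X)
    (hsub : ∀ v : Fin (n+1) → Bool, cwt v ≤ m → v ≠ topVert (n+1) →
      (fun ω : Fin (n+1) → Bool => lam (fun i => v i && ω i)) ∈ CX.C (n+1))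
    (hagr : ∀ ω : Fin (n+1) → Bool, cwt ω ≤ m → ω ≠ topVert (n+1) → f (lam ω) = μ ω)
    {v : Fin (n+1) → Bool} (hv : cwt v = m+1) (hvt : v ≠ topVert (n+1)) :
    ∃ x : X, f x = μ v ∧
      (fun ω : Fin (n+1) → Bool =>
        if (fun i => v i && ω i) = v then x else lam (fun i => v i && ω i)) ∈ CX.C (n+1) := by
  have hmn : m + 1 ≤ n := by
    have := cwt_lt_of_ne_top hvt
    omega
  have hcard : Fintype.card {i // v i = true} = m+1 := by
    rw [Fintype.card_subtype]
    exact hv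
  let E0 : {i // v i = true} ≃ Fin (m+1) := Fintype.equivFinOfCardEq hcard
  -- the cube in Y over the subcube below v
  have hc : (fun ω => μ (vEmb v E0 ω)) ∈ CY.C (m+1) := by
    have key : (fun ω => μ (vEmb v E0 ω)) =
        (fun ω : Fin (n+1) → Bool => μ (fun i => v i && ω i)) ∘ vEmb v E0 := by
      funext ω
      simp only [Function.comp_apply]
      rw [and_vEmb]
    rw [key]
    exact CY.C_morph _ (vEmb_morph E0) _ (hμ v hvt)
  -- the corner in X
  have hcorner : IsCubeCorner CX m (fun ω => lam (vEmb v E0 ω)) := by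
    intro j
    set v' : Fin (n+1) → Bool := fun i => if i = (E0.symm j : Fin (n+1)) then false else v i
      with hv'def
    have hv'sub : ∀ i, v' i = true → v i = true := by
      intro i hi
      rw [hv'def] at hi
      simp only at hi
      by_cases h : i = (E0.symm j : Fin (n+1))
      · rw [if_pos h] at hi
        exact Bool.noConfusion hi
      · rw [if_neg h] at hi
        exact hi
    have hv'e : v' ((E0.symm j : Fin (n+1))) = false := by rw [hv'def]; simp
    have hv'wt : cwt v' ≤ m := by
      have hsubset : (Finset.univ.filter fun i => v' i = true) ⊆
          (Finset.univ.filter fun i => v i = true).erase ((E0.symm j : Fin (n+1))) := by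
        intro i hi
        rw [Finset.mem_filter] at hi
        rw [Finset.mem_erase]
        refine ⟨?_, Finset.mem_filter.mpr ⟨Finset.mem_univ i, hv'sub i hi.2⟩⟩
        intro hcon
        rw [hcon, hv'e] at hi
        exact Bool.noConfusion hi.2
      have h1 : cwt v' ≤ ((Finset.univ.filter fun i => v i = true).erase
          ((E0.symm j : Fin (n+1)))).card := Finset.card_le_card hsubset
      have h3 : ((Finset.univ.filter fun i => v i = true).erase
          ((E0.symm j : Fin (n+1)))).card = (Finset.univ.filter fun i => v i = true).card - 1 :=
        Finset.card_erase_of_mem (Finset.mem_filter.mpr ⟨Finset.mem_univ _, (E0.symm j).2⟩)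
      have h2 : (Finset.univ.filter fun i => v i = true).card = m + 1 := hv
      omega
    have hv'ne : v' ≠ topVert (n+1) := by
      intro hcon
      have := congrFun hcon ((E0.symm j : Fin (n+1)))
      rw [hv'e] at this
      exact Bool.noConfusion this
    have hρ : IsCubeMorphism (fun ω : Fin m → Bool => vEmb v E0 (j.insertNth false ω)) := by
      intro i
      by_cases hvi : v i = true
      · by_cases hj : E0 ⟨i, hvi⟩ = j
        · refine Or.inl fun ω => ?_
          show vEmb v E0 (j.insertNth false ω) i = false
          rw [vEmb_pos E0 _ hvi, hj, Fin.insertNth_apply_same]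
        · obtain ⟨s, hs⟩ := Fin.exists_succAbove_eq hj
          refine Or.inr (Or.inr (Or.inl ⟨s, fun ω => ?_⟩))
          show vEmb v E0 (j.insertNth false ω) i = ω s
          rw [vEmb_pos E0 _ hvi, ← hs, Fin.insertNth_apply_succAbove]
      · exact Or.inl fun ω => vEmb_neg E0 _ hvi
    have key : (fun ω : Fin m → Bool => lam (vEmb v E0 (j.insertNth false ω))) =
        (fun ω : Fin (n+1) → Bool => lam (fun i => v' i && ω i)) ∘
          (fun ω : Fin m → Bool => vEmb v E0 (j.insertNth false ω)) := by
      funext ω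
      simp only [Function.comp_apply]
      congr 1
      funext i
      cases hEx : vEmb v E0 (j.insertNth false ω) i
      · rw [Bool.and_false]
      · have hvi : v i = true := vEmb_le E0 _ hEx
        have hine : i ≠ (E0.symm j : Fin (n+1)) := by
          intro hcon
          rw [hcon, vEmb_e] at hEx
          rw [Fin.insertNth_apply_same] at hEx
          exact Bool.noConfusion hEx
        have : v' i = true := by
          show (if i = (E0.symm j : Fin (n+1)) then false else v i) = true
          rw [if_neg hine]; exact hvi
        rw [this, Bool.true_and]
    rw [key]
    exact CX.C_morph _ hρ _ (hsub v' hv'wt hv'ne)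
  -- agreement off the top vertex
  have hagrE : ∀ ω : Fin (m+1) → Bool, ω ≠ topVert (m+1) →
      f (lam (vEmb v E0 ω)) = μ (vEmb v E0 ω) := by
    intro ω hω
    obtain ⟨j0, hj0⟩ := exists_false_of_ne_top hω
    have hwt : cwt (vEmb v E0 ω) ≤ m := by
      have hsubset : (Finset.univ.filter fun i => vEmb v E0 ω i = true) ⊆
          (Finset.univ.filter fun i => v i = true).erase ((E0.symm j0 : Fin (n+1))) := by
        intro i hi
        rw [Finset.mem_filter] at hi
        rw [Finset.mem_erase]
        refine ⟨?_, Finset.mem_filter.mpr ⟨Finset.mem_univ i, vEmb_le E0 ω hi.2⟩⟩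
        intro hcon
        rw [hcon, vEmb_e, hj0] at hi
        exact Bool.noConfusion hi.2
      have h1 : cwt (vEmb v E0 ω) ≤ ((Finset.univ.filter fun i => v i = true).erase
          ((E0.symm j0 : Fin (n+1)))).card := Finset.card_le_card hsubset
      have h3 : ((Finset.univ.filter fun i => v i = true).erase
          ((E0.symm j0 : Fin (n+1)))).card = (Finset.univ.filter fun i => v i = true).card - 1 :=
        Finset.card_erase_of_mem (Finset.mem_filter.mpr ⟨Finset.mem_univ _, (E0.symm j0).2⟩)
      have h2 : (Finset.univ.filter fun i => v i = true).card = m + 1 := hv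
      omega
    have hne : vEmb v E0 ω ≠ topVert (n+1) := by
      intro hcon
      rw [hcon, cwt_topVert] at hwt
      omega
    exact hagr _ hwt hne
  obtain ⟨x, hx1, hx2⟩ := hf.2.2 m (fun ω => lam (vEmb v E0 ω)) (fun ω => μ (vEmb v E0 ω))
    hcorner hc hagrE
  have hE'' : IsCubeMorphism
      (fun (ω : Fin (n+1) → Bool) (j : Fin (m+1)) => ω ((E0.symm j : Fin (n+1)))) :=
    fun j => Or.inr (Or.inr (Or.inl ⟨(E0.symm j : Fin (n+1)), fun ω => rfl⟩))
  have key2 : (fun ω : Fin (n+1) → Bool =>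
      if (fun i => v i && ω i) = v then x else lam (fun i => v i && ω i)) =
      (fun ω => if ω = topVert (m+1) then x else lam (vEmb v E0 ω)) ∘
        (fun (ω : Fin (n+1) → Bool) (j : Fin (m+1)) => ω ((E0.symm j : Fin (n+1)))) := by
    funext ω
    show _ = if (fun j => ω ((E0.symm j : Fin (n+1)))) = topVert (m+1) then x
      else lam (vEmb v E0 (fun j => ω ((E0.symm j : Fin (n+1)))))
    rw [vEmb_proj, if_congr (proj_top_iff E0 ω) rfl rfl]
  refine ⟨x, ?_, ?_⟩
  · rw [hx1]
    show μ (vEmb v E0 (topVert (m+1))) = μ v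
    rw [vEmb_top]
  · rw [key2]
    exact CX.C_morph _ hE'' _ hx2

lemma lift_step {X Y : Type*} {CX : Cubespace X} {CY : Cubespace Y} {f : X → Y}
    (hf : IsFibration CX CY f) {n : ℕ} {μ : (Fin (n+1) → Bool) → Y}
    (hμ : ∀ v : Fin (n+1) → Bool, v ≠ topVert (n+1) →
      (fun ω : Fin (n+1) → Bool => μ (fun i => v i && ω i)) ∈ CY.C (n+1)) :
    ∀ m : ℕ, ∃ lam : (Fin (n+1) → Bool) → X,
      (∀ v : Fin (n+1) → Bool, cwt v ≤ m → v ≠ topVert (n+1) →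
        (fun ω : Fin (n+1) → Bool => lam (fun i => v i && ω i)) ∈ CX.C (n+1)) ∧
      (∀ ω : Fin (n+1) → Bool, cwt ω ≤ m → ω ≠ topVert (n+1) → f (lam ω) = μ ω) := by
  intro m
  induction m with
  | zero =>
    obtain ⟨x0, hx0⟩ := hf.2.1 (μ (fun _ => false))
    refine ⟨fun _ => x0, fun v _ _ => const_mem_C CX (n+1) x0, ?_⟩
    intro ω hω _
    have hωb : ω = fun _ => false := by
      funext i
      cases hi : ω i
      · rfl
      · exfalso
        have hmem : i ∈ Finset.univ.filter fun j => ω j = true :=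
          Finset.mem_filter.mpr ⟨Finset.mem_univ i, hi⟩
        have h2 : (Finset.univ.filter fun j => ω j = true) = ∅ :=
          Finset.card_eq_zero.mp (Nat.le_zero.mp hω)
        rw [h2] at hmem
        exact absurd hmem (Finset.notMem_empty i)
    rw [hωb]
    exact hx0
  | succ m ih =>
    obtain ⟨lam, hsub, hagr⟩ := ih
    have claim : ∀ v : Fin (n+1) → Bool, cwt v = m+1 ∧ v ≠ topVert (n+1) →
        ∃ x : X, f x = μ v ∧
          (fun ω : Fin (n+1) → Bool =>
            if (fun i => v i && ω i) = v then x else lam (fun i => v i && ω i)) ∈ CX.C (n+1) :=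
      fun v hv => fill_vertex hf hμ lam hsub hagr hv.1 hv.2
    classical
    set lam' : (Fin (n+1) → Bool) → X := fun ω =>
      if h : cwt ω = m+1 ∧ ω ≠ topVert (n+1) then (claim ω h).choose else lam ω with hlam'
    have hlam'_low : ∀ ω, cwt ω ≤ m → lam' ω = lam ω := by
      intro ω h
      rw [hlam']
      simp only
      rw [dif_neg (fun hc => absurd hc.1 (by omega))]
    have hlam'_eq : ∀ v (h : cwt v = m+1 ∧ v ≠ topVert (n+1)),
        lam' v = (claim v h).choose := by
      intro v h
      rw [hlam']
      simp only
      rw [dif_pos h]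
    have hand : ∀ (v ω : Fin (n+1) → Bool) i, (v i && ω i) = true → v i = true := by
      intro v ω i h
      cases hv' : v i
      · rw [hv'] at h
        exact Bool.noConfusion h
      · rfl
    refine ⟨lam', ?_, ?_⟩
    · intro v hv hvt
      rcases Nat.lt_or_ge (cwt v) (m+1) with hlt | hge
      · have hle : cwt v ≤ m := by omega
        have he : (fun ω : Fin (n+1) → Bool => lam' (fun i => v i && ω i)) =
            (fun ω : Fin (n+1) → Bool => lam (fun i => v i && ω i)) := by
          funext ω
          apply hlam'_low
          exact le_trans (cwt_mono (hand v ω)) hle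
        rw [he]
        exact hsub v hle hvt
      · have heq : cwt v = m+1 := le_antisymm hv hge
        have hpair : cwt v = m+1 ∧ v ≠ topVert (n+1) := ⟨heq, hvt⟩
        have he : (fun ω : Fin (n+1) → Bool => lam' (fun i => v i && ω i)) =
            (fun ω : Fin (n+1) → Bool =>
              if (fun i => v i && ω i) = v then (claim v hpair).choose
              else lam (fun i => v i && ω i)) := by
          funext ω
          by_cases hw : (fun i => v i && ω i) = v
          · rw [if_pos hw, hw, hlam'_eq v hpair]
          · rw [if_neg hw]
            apply hlam'_low
            have hlt2 : cwt (fun i => v i && ω i) < cwt v := cwt_strict (hand v ω) hw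
            omega
        rw [he]
        exact ((claim v hpair).choose_spec).2
    · intro ω hω hωt
      rcases Nat.lt_or_ge (cwt ω) (m+1) with hlt | hge
      · rw [hlam'_low ω (by omega)]
        exact hagr ω (by omega) hωt
      · have heq : cwt ω = m+1 := le_antisymm hω hge
        rw [hlam'_eq ω ⟨heq, hωt⟩]
        exact ((claim ω ⟨heq, hωt⟩).choose_spec).1

lemma corner_lift {X Y : Type*} {CX : Cubespace X} {CY : Cubespace Y} {f : X → Y}
    (hf : IsFibration CX CY f) {n : ℕ}
    {μ : (Fin (n+1) → Bool) → Y} (hμ : IsCubeCorner CY n μ) :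
    ∃ lam : (Fin (n+1) → Bool) → X, IsCubeCorner CX n lam ∧
      ∀ ω, ω ≠ topVert (n+1) → f (lam ω) = μ ω := by
  obtain ⟨lam, hsub, hagr⟩ := lift_step hf (fun v hv => corner_sub CY hμ hv) n
  exact ⟨lam, corner_of_sub CX (fun v hv => hsub v (cwt_lt_of_ne_top hv) hv),
    fun ω hω => hagr ω (cwt_lt_of_ne_top hω) hω⟩

lemma cube_lift {X Y : Type*} {CX : Cubespace X} {CY : Cubespace Y} {f : X → Y}
    (hf : IsFibration CX CY f) :
    ∀ (k : ℕ) (c : (Fin k → Bool) → Y), c ∈ CY.C k →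
      ∃ ct : (Fin k → Bool) → X, ct ∈ CX.C k ∧ ∀ ω, f (ct ω) = c ω := by
  intro k c hc
  cases k with
  | zero =>
    refine ⟨fun ω => (hf.2.1 (c ω)).choose, ?_, fun ω => (hf.2.1 (c ω)).choose_spec⟩
    rw [CX.C_zero]
    trivial
  | succ n =>
    obtain ⟨lam, hcor, hagr⟩ := corner_lift hf (cube_isCorner CY hc)
    obtain ⟨x, hx1, hx2⟩ := hf.2.2 n lam c hcor hc hagr
    refine ⟨_, hx2, ?_⟩
    intro ω
    by_cases h : ω = topVert (n+1)
    · simp only [if_pos h]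
      rw [hx1, h]
    · simp only [if_neg h]
      exact hagr ω h


/-- If `f : X → Y` is a fibration and `g ∘ f : X → Z` is a fibration, then
`g : Y → Z` is a fibration.  In particular, if `f : X → Y` is a fibration and `X` is fibrant
(has `k`-completion for all `k`), then `Y` is fibrant. -/
theorem fibration_universal_property {X Y Z : Type*} (CX : Cubespace X) (CY : Cubespace Y)
    (CZ : Cubespace Z) (f : X → Y) (g : Y → Z)
    (hf : IsFibration CX CY f) (hgf : IsFibration CX CZ (fun x => g (f x))) :
    IsFibration CY CZ g ∧
      ((∀ n, HasCompletion CX n) → ∀ n, HasCompletion CY n) := by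
  obtain ⟨hgfm, hgfs, hgffib⟩ := hgf
  constructor
  · refine ⟨?_, ?_, ?_⟩
    · -- g is a morphism
      intro k c hc
      obtain ⟨ct, hct, hcta⟩ := cube_lift hf k c hc
      have he : (fun ω => g (c ω)) = (fun ω => g (f (ct ω))) := by
        funext ω
        rw [hcta]
      rw [he]
      exact hgfm k ct hct
    · -- g is surjective
      intro z
      obtain ⟨x, hx⟩ := hgfs z
      exact ⟨f x, hx⟩
    · -- corner completion for g
      intro n ν c hcor hc hagr
      obtain ⟨lam', hcor', hagr'⟩ := corner_lift hf hcor
      have hagr'' : ∀ ω, ω ≠ topVert (n+1) → (fun x => g (f x)) (lam' ω) = c ω := by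
        intro ω hω
        show g (f (lam' ω)) = c ω
        rw [hagr' ω hω]
        exact hagr ω hω
      obtain ⟨x, hx1, hx2⟩ := hgffib n lam' c hcor' hc hagr''
      refine ⟨f x, hx1, ?_⟩
      have key : (fun ω => if ω = topVert (n+1) then f x else ν ω) =
          fun ω => f (if ω = topVert (n+1) then x else lam' ω) := by
        funext ω
        by_cases h : ω = topVert (n+1)
        · simp [h]
        · simp only [if_neg h]
          exact (hagr' ω h).symm
      rw [key]
      exact hf.1 (n+1) _ hx2
  · -- fibrancy transfer
    intro hcomp n ν hcor
    obtain ⟨lam', hcor', hagr'⟩ := corner_lift hf hcor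
    obtain ⟨x, hx⟩ := hcomp n lam' hcor'
    refine ⟨f x, ?_⟩
    have key : (fun ω => if ω = topVert (n+1) then f x else ν ω) =
        fun ω => f (if ω = topVert (n+1) then x else lam' ω) := by
      funext ω
      by_cases h : ω = topVert (n+1)
      · simp [h]
      · simp only [if_neg h]
        exact (hagr' ω h).symm
    rw [key]
    exact hf.1 (n+1) _ hx
end

section
/- Let f : X → Y be a fibration between cubespaces, where X has s-uniqueness. Then Y has s-uniqueness: if x, y ∈ Y and the configuration on {0,1}^s equal to x at all vertices except the top vertex and y at the top vertex lies in C^s(Y), then x = y. -/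
lemma const_cube' {X : Type*} (CS : Cubespace X) (k : ℕ) (a : X) :
    (fun _ : Fin k → Bool => a) ∈ CS.C k := by
  have h := CS.C_morph (k := k) (l := 0) (fun _ => Fin.elim0)
    (fun i => i.elim0) (fun _ => a) (by rw [CS.C_zero]; trivial)
  exact h

/-- If `f : X → Y` is a fibration and `X` has `s`-uniqueness, then `Y` has
`s`-uniqueness: if the configuration equal to `x` at all vertices except the top vertex and
`y` at the top vertex is an `s`-cube of `Y`, then `x = y`. -/
theorem fibration_image_uniqueness {X Y : Type*} (CX : Cubespace X) (CY : Cubespace Y)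
    (f : X → Y) (hf : IsFibration CX CY f) (s : ℕ) (hX : HasUniqueness CX s)
    (x y : Y)
    (hc : (fun ω : Fin s → Bool => if ω = topVert s then y else x) ∈ CY.C s) :
    x = y := by
  obtain ⟨hmor, hsurj, hfib⟩ := hf
  cases s with
  | zero =>
    obtain ⟨x0, hx0⟩ := hsurj x
    obtain ⟨y0, hy0⟩ := hsurj y
    have h := hX (fun _ => x0) (by rw [CX.C_zero]; trivial)
      (fun _ => y0) (by rw [CX.C_zero]; trivial)
      (fun ω hω => absurd (funext fun i => i.elim0) hω)
    have hxy : x0 = y0 := congrFun h (topVert 0)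
    rw [← hx0, ← hy0, hxy]
  | succ n =>
    obtain ⟨x0, hx0⟩ := hsurj x
    have hcorner : IsCubeCorner CX n (fun _ => x0) := fun i => const_cube' CX n x0
    obtain ⟨x', hx', hcube⟩ := hfib n (fun _ => x0) _ hcorner hc
      (fun ω hω => by simp [hω, hx0])
    have hconst := const_cube' CX (n+1) x0
    have heq := hX _ hcube _ hconst (fun ω hω => by simp [hω])
    have hxx : x' = x0 := by simpa using congrFun heq (topVert (n+1))
    have : f x' = y := by simpa using hx'
    rw [← this, hxx, hx0]
end

section
/- Let G_• be a filtered group and p : Z → G a polynomial sequence, i.e. ∂_{h_i}...∂_{h_1} p(x) ∈ G_i for all i ≥ 0 and all h_1,...,h_i, x ∈ Z, where ∂_h p(x) = p(x+h) p(x)^{-1}. Then for every k ≥ 0 and x, h_1, ..., h_k ∈ Z, the configuration ω ↦ p(x + ∑_{i=1}^k h_i ω_i) on {0,1}^k lies in HK^k(G_•). -/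
open Subgroup

structure IsGroupFiltration {G : Type*} [Group G] (Gf : ℕ → Subgroup G) : Prop where
  top : Gf 0 = ⊤
  mono : ∀ i, Gf (i + 1) ≤ Gf i
  comm : ∀ i j, ⁅Gf i, Gf j⁆ ≤ Gf (i + j)

def upperFaceConfig {G : Type*} [Group G] {k : ℕ} (S : Finset (Fin k)) (x : G) :
    (Fin k → Bool) → G :=
  fun ω => if ∀ i ∈ S, ω i = true then x else 1

def hostKra {G : Type*} [Group G] (Gf : ℕ → Subgroup G) (k : ℕ) :
    Subgroup ((Fin k → Bool) → G) :=
  Subgroup.closure { c | ∃ (S : Finset (Fin k)) (x : G), x ∈ Gf S.card ∧ c = upperFaceConfig S x }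

def dder {G : Type*} [Group G] (h : ℤ) (f : ℤ → G) : ℤ → G :=
  fun x => f (x + h) * (f x)⁻¹

/-- Extension of a configuration on `{0,1}^k` to `{0,1}^{k+1}`, ignoring the last coord. -/
def extHom0 {G : Type*} [Group G] {k : ℕ} : ((Fin k → Bool) → G) →* ((Fin (k+1) → Bool) → G) where
  toFun f := fun ω => f (ω ∘ Fin.castSucc)
  map_one' := rfl
  map_mul' _ _ := rfl

/-- Extension of a configuration on `{0,1}^k` supported on the upper face of the last coord. -/
def extHom1 {G : Type*} [Group G] {k : ℕ} : ((Fin k → Bool) → G) →* ((Fin (k+1) → Bool) → G) where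
  toFun f := fun ω => if ω (Fin.last k) = true then f (ω ∘ Fin.castSucc) else 1
  map_one' := by funext ω; simp
  map_mul' a b := by funext ω; by_cases hω : ω (Fin.last k) = true <;> simp [hω]

lemma extHom0_mem {G : Type*} [Group G] (Gf : ℕ → Subgroup G) {k : ℕ}
    {c : (Fin k → Bool) → G} (hc : c ∈ hostKra Gf k) : extHom0 c ∈ hostKra Gf (k+1) := by
  have hle : Subgroup.map extHom0 (hostKra Gf k) ≤ hostKra Gf (k+1) := by
    rw [hostKra, MonoidHom.map_closure]
    apply Subgroup.closure_le _ |>.2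
    rintro _ ⟨c, ⟨S, y, hy, rfl⟩, rfl⟩
    apply Subgroup.subset_closure
    refine ⟨S.image Fin.castSucc, y, ?_, ?_⟩
    · rwa [Finset.card_image_of_injective S (Fin.castSucc_injective k)]
    · funext ω
      show (if ∀ i ∈ S, ω (Fin.castSucc i) = true then y else 1) = _
      unfold upperFaceConfig
      congr 1
      simp [Finset.mem_image]
  exact hle (Subgroup.mem_map_of_mem _ hc)

lemma extHom1_mem {G : Type*} [Group G] (Gf : ℕ → Subgroup G) {k : ℕ}
    {c : (Fin k → Bool) → G} (hc : c ∈ hostKra (fun n => Gf (n+1)) k) :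
    extHom1 c ∈ hostKra Gf (k+1) := by
  have hle : Subgroup.map extHom1 (hostKra (fun n => Gf (n+1)) k) ≤ hostKra Gf (k+1) := by
    rw [hostKra, MonoidHom.map_closure]
    apply Subgroup.closure_le _ |>.2
    rintro _ ⟨c, ⟨S, y, hy, rfl⟩, rfl⟩
    apply Subgroup.subset_closure
    have hnot : Fin.last k ∉ S.image Fin.castSucc := by
      intro hmem
      obtain ⟨i, -, heq⟩ := Finset.mem_image.1 hmem
      exact (Fin.castSucc_lt_last i).ne heq
    refine ⟨insert (Fin.last k) (S.image Fin.castSucc), y, ?_, ?_⟩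
    · rw [Finset.card_insert_of_notMem hnot,
        Finset.card_image_of_injective S (Fin.castSucc_injective k)]
      exact hy
    · funext ω
      show (if ω (Fin.last k) = true then upperFaceConfig S y (ω ∘ Fin.castSucc) else 1) = _
      unfold upperFaceConfig
      by_cases hω : ω (Fin.last k) = true
      · simp only [hω, if_true]
        congr 1
        simp [Finset.mem_image, hω]
      · rw [if_neg hω, if_neg]
        intro hall
        exact hω (hall (Fin.last k) (Finset.mem_insert_self _ _))
  exact hle (Subgroup.mem_map_of_mem _ hc)

lemma main_lemma {G : Type*} [Group G] :
    ∀ (k : ℕ) (Gf : ℕ → Subgroup G) (p : ℤ → G),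
    (∀ (i : ℕ) (hs : Fin i → ℤ) (x : ℤ), ((List.ofFn hs).foldr dder p) x ∈ Gf i) →
    ∀ (x : ℤ) (h : Fin k → ℤ),
    (fun ω : Fin k → Bool => p (x + ∑ i, if ω i then h i else 0)) ∈ hostKra Gf k := by
  intro k
  induction k with
  | zero =>
    intro Gf p hp x h
    apply Subgroup.subset_closure
    refine ⟨∅, p (x + 0), ?_, ?_⟩
    · have := hp 0 (fun i => i.elim0) (x + 0)
      simpa using this
    · funext ω
      simp [upperFaceConfig]
  | succ k IH =>
    intro Gf p hp x h
    set hk := h (Fin.last k) with hhk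
    set h' : Fin k → ℤ := fun i => h i.castSucc with hh'
    -- derivative is a polynomial sequence for shifted filtration
    have hp' : ∀ (i : ℕ) (hs : Fin i → ℤ) (y : ℤ),
        ((List.ofFn hs).foldr dder (dder hk p)) y ∈ (fun n => Gf (n+1)) i := by
      intro i hs y
      have h1 : (List.ofFn (Fin.snoc hs hk : Fin (i+1) → ℤ)) = List.ofFn hs ++ [hk] := by
        rw [List.ofFn_succ']
        simp [Fin.snoc_castSucc, Fin.snoc_last, List.concat_eq_append]
      have := hp (i+1) (Fin.snoc hs hk) y
      rwa [h1, List.foldr_append] at this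
    have hd := IH (fun n => Gf (n+1)) (dder hk p) hp' x h'
    have hq := IH Gf p hp x h'
    have key : (fun ω : Fin (k+1) → Bool => p (x + ∑ i, if ω i then h i else 0))
        = extHom1 (fun ω : Fin k → Bool => (dder hk p) (x + ∑ i, if ω i then h' i else 0))
          * extHom0 (fun ω : Fin k → Bool => p (x + ∑ i, if ω i then h' i else 0)) := by
      funext ω
      have hsum : (∑ i, if ω i then h i else 0)
          = (∑ i : Fin k, if ω i.castSucc then h' i else 0)
            + (if ω (Fin.last k) then hk else 0) := by
        rw [Fin.sum_univ_castSucc]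
      show p (x + ∑ i, if ω i then h i else 0)
          = (if ω (Fin.last k) = true then
              (dder hk p) (x + ∑ i : Fin k, if (ω ∘ Fin.castSucc) i then h' i else 0) else 1)
            * p (x + ∑ i : Fin k, if (ω ∘ Fin.castSucc) i then h' i else 0)
      by_cases hω : ω (Fin.last k) = true
      · simp only [hω, if_true, Function.comp, dder]
        rw [hsum, hω, if_pos rfl, ← add_assoc]
        group
      · rw [if_neg hω, one_mul, hsum, if_neg hω, add_zero]
        rfl
    rw [key]
    exact mul_mem (extHom1_mem Gf hd) (extHom0_mem Gf hq)

/-- If `p : ℤ → G` is a polynomial sequence with respect to the filtration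
`G_•` (all `i`-fold derivatives take values in `G_i`), then for every `k`, `x` and
`h_1, …, h_k`, the configuration `ω ↦ p(x + ∑ h_i ω_i)` lies in `HK^k(G_•)`. -/
theorem polynomial_sequence_maps_cubes {G : Type*} [Group G] (Gf : ℕ → Subgroup G)
    (hf : IsGroupFiltration Gf) (p : ℤ → G)
    (hp : ∀ (i : ℕ) (hs : Fin i → ℤ) (x : ℤ), ((List.ofFn hs).foldr dder p) x ∈ Gf i)
    (k : ℕ) (x : ℤ) (h : Fin k → ℤ) :
    (fun ω : Fin k → Bool => p (x + ∑ i, if ω i then h i else 0)) ∈ hostKra Gf k :=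
  main_lemma k Gf p hp x h
end
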